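/- arXiv:1610.08457 — 3 statements merged into one kernel-verified Lean document; each statement's English description precedes it below -/
import Mathlib

section
/- Let X →u Y →v Z →w X[1] be an Auslander–Reiten triangle in K_I(P), where u and v denote chain-map representatives in C_I(P). Suppose u is sirreducible with its unique irreducible component u^i : X^i → Y^i in degree i, and v is smonic. Then X^j = 0 for all j > i, Y^j = 0 for all j < i, and Z is isomorphic in K_I(P) to the complex W with W^j = X^{j+1} for j < i and W^j = Y^j for j ≥ i, whose differential is -d_X^{j+1} in degrees j < i-1, is u^i : X^i → Y^i in degree i-1, and is d_Y^j in degrees j ≥ i. -/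
section Nakayama
variable {R : Type*} [Ring R]

lemma ARShapes.aux_isMaximal {M : Type*} [AddCommGroup M] [Module R M]
    {N : Submodule R M} (hN : IsCoatom N) {m : M} (hm : m ∉ N) :
    Ideal.IsMaximal (Submodule.comap (LinearMap.toSpanSingleton R M m) N) := by
  rw [Ideal.isMaximal_def]
  constructor
  · intro htop
    apply hm
    have h1 : (1 : R) ∈ Submodule.comap (LinearMap.toSpanSingleton R M m) N := by
      rw [htop]; trivial
    simpa using h1
  · intro I' hI'
    obtain ⟨r, hrI', hr⟩ := SetLike.exists_of_lt hI'
    have hrm : r • m ∉ N := by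
      intro hh
      exact hr (Submodule.mem_comap.mpr (by simpa using hh))
    have hlt : N < N ⊔ Submodule.span R {r • m} :=
      lt_of_le_of_ne le_sup_left (fun he => hrm (by
        rw [he]; exact Submodule.mem_sup_right (Submodule.mem_span_singleton_self _)))
    have htop : N ⊔ Submodule.span R {r • m} = ⊤ := hN.2 _ hlt
    have hmem : m ∈ N ⊔ Submodule.span R {r • m} := by rw [htop]; trivial
    obtain ⟨x, hx, y, hy, hxy⟩ := Submodule.mem_sup.mp hmem
    obtain ⟨c, rfl⟩ := Submodule.mem_span_singleton.mp hy
    have hsub : (1 - c * r) • m ∈ N := by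
      have hx' : x = m - c • (r • m) := eq_sub_of_add_eq hxy
      have : (1 - c * r) • m = x := by
        rw [hx', sub_smul, one_smul, mul_smul]
      rw [this]; exact hx
    have h1' : (1 : R) - c * r ∈ I' := le_of_lt hI' (Submodule.mem_comap.mpr (by simpa using hsub))
    have h2' : c * r ∈ I' := by
      simpa [smul_eq_mul] using I'.smul_mem c hrI'
    have h1mem : (1 : R) ∈ I' := by
      have := I'.add_mem h1' h2'
      simpa using this
    exact Submodule.eq_top_iff'.mpr (fun x => by simpa [smul_eq_mul] using I'.smul_mem x h1mem)

lemma ARShapes.nakayama {M : Type*} [AddCommGroup M] [Module R M] [Module.Finite R M]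
    (h : (⊤ : Submodule R M) ≤ (Ideal.jacobson (⊥ : Ideal R)) • ⊤) : Subsingleton M := by
  by_contra hs
  have : Nontrivial M := not_subsingleton_iff_nontrivial.mp hs
  have hc : IsCoatomic (Submodule R M) :=
    CompleteLattice.coatomic_of_top_compact ((Submodule.fg_iff_compact ⊤).mp Module.Finite.fg_top)
  obtain h' | ⟨N, hN, -⟩ := hc.eq_top_or_exists_le_coatom ⊥
  · exact absurd h' bot_ne_top
  · have key : (Ideal.jacobson (⊥ : Ideal R)) • (⊤ : Submodule R M) ≤ N := by
      rw [Submodule.smul_le]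
      intro a ha m _
      by_cases hm : m ∈ N
      · exact N.smul_mem a hm
      · have hImax := ARShapes.aux_isMaximal hN hm
        have hle : Ideal.jacobson (⊥ : Ideal R) ≤
            Submodule.comap (LinearMap.toSpanSingleton R M m) N :=
          sInf_le ⟨bot_le, hImax⟩
        simpa using hle ha
    exact hN.1 (top_le_iff.mp (le_trans h key))

lemma ARShapes.smul_top_map {M N : Type*} [AddCommGroup M] [AddCommGroup N]
    [Module R M] [Module R N] (J : Ideal R) (φ : M →ₗ[R] N) {x : M}
    (hx : x ∈ J • (⊤ : Submodule R M)) : φ x ∈ J • (⊤ : Submodule R N) := by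
  have h1 : φ x ∈ Submodule.map φ (J • ⊤) := Submodule.mem_map_of_mem hx
  rw [Submodule.map_smul''] at h1
  exact Submodule.smul_mono le_rfl le_top h1

end Nakayama

/-! Statement 14: Theorem 2(c)(1) of the paper. -/

open CategoryTheory CategoryTheory.Limits CategoryTheory.Pretriangulated

namespace ARShapes

variable {Λ : Type} [Ring Λ]

/-- Cochain complexes of (right) `Λ`-modules, i.e. `Λᵐᵒᵖ`-modules, indexed by `ℤ`. -/
abbrev Cplx (Λ : Type) [Ring Λ] : Type 1 := CochainComplex (ModuleCat Λᵐᵒᵖ) ℤ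

/-- A minimal projective complex: a complex of finitely generated projective right
`Λ`-modules whose differentials have image contained in the radical of the target. -/
def IsMinimalProjective (X : Cplx Λ) : Prop :=
  (∀ i : ℤ, Module.Finite Λᵐᵒᵖ (X.X i)) ∧ (∀ i : ℤ, Module.Projective Λᵐᵒᵖ (X.X i)) ∧
    (∀ i : ℤ, LinearMap.range (X.d i (i + 1)).hom ≤
      (Ideal.jacobson (⊥ : Ideal Λᵐᵒᵖ)) • (⊤ : Submodule Λᵐᵒᵖ (X.X (i + 1))))

/-- Irreducibility of a morphism in the category `P` of finitely generated projective
right `Λ`-modules (a full subcategory of all modules). -/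
def IrreducibleP {M N : ModuleCat Λᵐᵒᵖ} (φ : M ⟶ N) : Prop :=
  ¬ IsSplitMono φ ∧ ¬ IsSplitEpi φ ∧
    ∀ (Z : ModuleCat Λᵐᵒᵖ), Module.Finite Λᵐᵒᵖ Z → Module.Projective Λᵐᵒᵖ Z →
      ∀ (g : M ⟶ Z) (h : Z ⟶ N), φ = g ≫ h → IsSplitMono g ∨ IsSplitEpi h

/-- A chain map is smonic if all of its components are split monomorphisms. -/
def Smonic {X Y : Cplx Λ} (f : X ⟶ Y) : Prop := ∀ i : ℤ, IsSplitMono (f.f i)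

/-- A chain map is sepic if all of its components are split epimorphisms. -/
def Sepic {X Y : Cplx Λ} (f : X ⟶ Y) : Prop := ∀ i : ℤ, IsSplitEpi (f.f i)

/-- A chain map is sirreducible if there is exactly one index `i₀` where the component is
irreducible in the category of finitely generated projective modules, the components in lower
degrees being split epimorphisms and those in higher degrees split monomorphisms. -/
def Sirreducible {X Y : Cplx Λ} (f : X ⟶ Y) : Prop :=
  ∃ i₀ : ℤ, IrreducibleP (f.f i₀) ∧ (∀ i : ℤ, i < i₀ → IsSplitEpi (f.f i)) ∧
    (∀ i : ℤ, i₀ < i → IsSplitMono (f.f i))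

/-- An object of a preadditive category is indecomposable if it is nonzero and, whenever it is
exhibited as a biproduct of two objects (via inclusions and projections satisfying the biproduct
identities), one of the two summands is zero. -/
def Indecomposable {K : Type*} [Category K] [Preadditive K] (Z : K) : Prop :=
  ¬ IsZero Z ∧ ∀ (A B : K) (i : A ⟶ Z) (j : B ⟶ Z) (p : Z ⟶ A) (q : Z ⟶ B),
    i ≫ p = 𝟙 A → j ≫ q = 𝟙 B → i ≫ q = 0 → j ≫ p = 0 → p ≫ i + q ≫ j = 𝟙 Z →
    IsZero A ∨ IsZero B

/-- The quotient functor from minimal projective complexes to the homotopy category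
`K_I(P)` (realized inside the homotopy category of all complexes, of which `K_I(P)` is a full
subcategory; in particular distinguished triangles, isomorphisms, split epimorphisms and
zero-ness of morphisms in `K_I(P)` agree with those in the ambient homotopy category). -/
noncomputable abbrev Q (Λ : Type) [Ring Λ] :
    Cplx Λ ⥤ HomotopyCategory (ModuleCat Λᵐᵒᵖ) (ComplexShape.up ℤ) :=
  HomotopyCategory.quotient (ModuleCat Λᵐᵒᵖ) (ComplexShape.up ℤ)

/-- `X →u Y →v Z →w X[1]` is an Auslander-Reiten triangle in `K_I(P)`: it is a distinguished
triangle, the end terms `X` and `Z` are indecomposable, the connecting morphism `w` is nonzero,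
and every morphism `W → Z` from an object of `K_I(P)` that is not a split epimorphism factors
through `v`. -/
def IsARTriangle {X Y Z : Cplx Λ} (u : X ⟶ Y) (v : Y ⟶ Z)
    (w : (Q Λ).obj Z ⟶ ((Q Λ).obj X)⟦(1 : ℤ)⟧) : Prop :=
  (Triangle.mk ((Q Λ).map u) ((Q Λ).map v) w ∈
    distTriang (HomotopyCategory (ModuleCat Λᵐᵒᵖ) (ComplexShape.up ℤ))) ∧
  Indecomposable ((Q Λ).obj X) ∧ Indecomposable ((Q Λ).obj Z) ∧ w ≠ 0 ∧
  ∀ (W : Cplx Λ), IsMinimalProjective W →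
    ∀ (φ : (Q Λ).obj W ⟶ (Q Λ).obj Z), ¬ IsSplitEpi φ →
      ∃ ψ : (Q Λ).obj W ⟶ (Q Λ).obj Y, ψ ≫ (Q Λ).map v = φ

/-- The components of the complex `W`: `W^j = X^{j+1}` for `j < i` and `W^j = Y^j`
for `j ≥ i`. -/
abbrev WX (X Y : Cplx Λ) (i j : ℤ) : ModuleCat Λᵐᵒᵖ :=
  if j < i then X.X (j + 1) else Y.X j

/-- The differential of the complex `W`: it is `-d_X^{j+1}` in degrees `j < i - 1`,
`u^i : X^i ⟶ Y^i` in degree `i - 1`, and `d_Y^j` in degrees `j ≥ i`. -/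
noncomputable def Wd {X Y : Cplx Λ} (u : X ⟶ Y) (i j : ℤ) :
    WX X Y i j ⟶ WX X Y i (j + 1) :=
  if h1 : j + 1 < i then
    eqToHom (if_pos (show j < i by omega)) ≫ (-(X.d (j + 1) (j + 1 + 1))) ≫
      eqToHom (if_pos h1).symm
  else if h2 : j < i then
    eqToHom (if_pos h2) ≫ u.f (j + 1) ≫ eqToHom (if_neg h1).symm
  else
    eqToHom (if_neg h2) ≫ Y.d j (j + 1) ≫ eqToHom (if_neg h1).symm

lemma Wsq {X Y : Cplx Λ} (u : X ⟶ Y) (i : ℤ)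
    (h1 : ∀ j : ℤ, i < j → IsZero (X.X j)) (h2 : ∀ j : ℤ, j < i → IsZero (Y.X j)) (j : ℤ) :
    Wd u i j ≫ Wd u i (j + 1) = 0 := by
  dsimp only [Wd]
  split_ifs with hA hC hC' hB hC''
  · -- degrees `< i - 2`: `(-d_X) ≫ (-d_X) = 0`
    simp only [Category.assoc, eqToHom_trans_assoc, eqToHom_refl, Category.id_comp,
      Preadditive.neg_comp, Preadditive.comp_neg, neg_neg]
    rw [HomologicalComplex.d_comp_d_assoc]
    simp
  · -- degree `i - 2`: `(-d_X) ≫ u^i = 0` since `u^{i-1}` lands in `Y^{i-1} = 0`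
    have h0 : u.f (j + 1) = 0 := (h2 (j + 1) hA).eq_of_tgt _ _
    have h0' : X.d (j + 1) (j + 1 + 1) ≫ u.f (j + 1 + 1) = 0 := by
      rw [← HomologicalComplex.Hom.comm, h0, zero_comp]
    simp only [Category.assoc, eqToHom_trans_assoc, eqToHom_refl, Category.id_comp,
      Preadditive.neg_comp, Preadditive.comp_neg, neg_eq_zero]
    rw [reassoc_of% h0']
    simp
  · omega
  · -- degree `i - 1`: `u^i ≫ d_Y = 0` since `d_X` lands in `X^{i+1} = 0`
    have h0 : X.d (j + 1) (j + 1 + 1) = 0 := (h1 (j + 1 + 1) (by omega)).eq_of_tgt _ _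
    have h0' : u.f (j + 1) ≫ Y.d (j + 1) (j + 1 + 1) = 0 := by
      rw [HomologicalComplex.Hom.comm, h0, zero_comp]
    simp only [Category.assoc, eqToHom_trans_assoc, eqToHom_refl, Category.id_comp]
    rw [reassoc_of% h0']
    simp
  · omega
  · -- degrees `≥ i`: `d_Y ≫ d_Y = 0`
    simp only [Category.assoc, eqToHom_trans_assoc, eqToHom_refl, Category.id_comp]
    rw [HomologicalComplex.d_comp_d_assoc]
    simp

/-- The complex `W` with `W^j = X^{j+1}` for `j < i` and `W^j = Y^j` for `j ≥ i`, whose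
differential is `-d_X^{j+1}` in degrees `j < i - 1`, `u^i` in degree `i - 1`, and `d_Y^j`
in degrees `j ≥ i`. -/
noncomputable def Wcplx {X Y : Cplx Λ} (u : X ⟶ Y) (i : ℤ)
    (h1 : ∀ j : ℤ, i < j → IsZero (X.X j)) (h2 : ∀ j : ℤ, j < i → IsZero (Y.X j)) : Cplx Λ :=
  CochainComplex.of (WX X Y i) (Wd u i) (Wsq u i h1 h2)

variable {X Y : Cplx Λ} (u : X ⟶ Y) (i : ℤ)
  (h1 : ∀ j : ℤ, i < j → IsZero (X.X j)) (h2 : ∀ j : ℤ, j < i → IsZero (Y.X j))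
  (sq : ∀ j, Wd u i j ≫ Wd u i (j+1) = 0)

open CochainComplex CochainComplex.mappingCone in
noncomputable def coneMap (h1 : ∀ j : ℤ, i < j → IsZero (X.X j))
    (h2 : ∀ j : ℤ, j < i → IsZero (Y.X j)) (sq : ∀ j, Wd u i j ≫ Wd u i (j+1) = 0) :
    CochainComplex.of (WX X Y i) (Wd u i) sq ⟶ CochainComplex.mappingCone u where
  f j := if hj : j < i then eqToHom (if_pos hj) ≫ (inl u).v (j + 1) j (by omega)
         else eqToHom (if_neg hj) ≫ (inr u).f j
  comm' := by
    rintro j _ (rfl : j + 1 = _)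
    rw [show (CochainComplex.of (WX X Y i) (Wd u i) sq).d j (j + 1) = Wd u i j from
      CochainComplex.of_d _ _ _]
    dsimp only
    by_cases hA : j + 1 < i
    · have hj : j < i := by omega
      rw [dif_pos hj, dif_pos hA, Wd, dif_pos hA]
      have hcone := inl_v_d u (j + 1) j (j + 1 + 1) (by omega) (by omega)
      have hu0 : u.f (j + 1) = 0 := (h2 (j + 1) hA).eq_of_tgt _ _
      rw [Category.assoc, hcone, hu0]
      simp
    · by_cases hj : j < i
      · rw [dif_pos hj, dif_neg hA, Wd, dif_neg hA, dif_pos hj]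
        have hcone := inl_v_d u (j + 1) j (j + 1 + 1) (by omega) (by omega)
        have hd0 : X.d (j + 1) (j + 1 + 1) = 0 := (h1 (j + 1 + 1) (by omega)).eq_of_tgt _ _
        rw [Category.assoc, hcone, hd0]
        simp
      · rw [dif_neg hj, dif_neg hA, Wd, dif_neg hA, dif_neg hj]
        rw [Category.assoc, inr_f_d]
        simp

open CochainComplex CochainComplex.mappingCone in
lemma coneMap_isIso : IsIso (coneMap u i h1 h2 sq) := by
  haveI : ∀ n : ℤ, IsIso ((coneMap u i h1 h2 sq).f n) := by
    intro n
    by_cases hn : n < i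
    · refine ⟨(fst u).1.v n (n + 1) rfl ≫ eqToHom (if_pos hn).symm, ?_, ?_⟩
      · rw [coneMap]; dsimp only; rw [dif_pos hn]
        simp
      · rw [coneMap]; dsimp only; rw [dif_pos hn]
        have hid := id_X u n (n + 1) rfl
        have hz : (inr u).f n = 0 := (h2 n hn).eq_of_src _ _
        rw [hz, comp_zero, add_zero] at hid
        simp [← hid]
    · refine ⟨(snd u).v n n (add_zero n) ≫ eqToHom (if_neg hn).symm, ?_, ?_⟩
      · rw [coneMap]; dsimp only; rw [dif_neg hn]
        simp
      · rw [coneMap]; dsimp only; rw [dif_neg hn]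
        have hid := id_X u n (n + 1) rfl
        have hz : (fst u).1.v n (n + 1) rfl = 0 := (h1 (n + 1) (by omega)).eq_of_tgt _ _
        rw [hz, zero_comp, zero_add] at hid
        simp [← hid]
  exact HomologicalComplex.Hom.isIso_of_components _

/-- Let `X →u Y →v Z →w X[1]` be an Auslander-Reiten triangle in `K_I(P)`
with `u` sirreducible, its unique irreducible component sitting in degree `i`, and `v` smonic.
Then `X^j = 0` for `j > i`, `Y^j = 0` for `j < i`, and `Z` is isomorphic in `K_I(P)` to the
complex `W` described in `Wcplx`. -/
theorem AR_sirreducible_smonic_shape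
    {k Λ : Type} [Field k] [Ring Λ] [Algebra k Λ] [FiniteDimensional k Λ]
    (X Y Z : Cplx Λ)
    (hX : IsMinimalProjective X) (hY : IsMinimalProjective Y) (hZ : IsMinimalProjective Z)
    (u : X ⟶ Y) (v : Y ⟶ Z) (w : (Q Λ).obj Z ⟶ ((Q Λ).obj X)⟦(1 : ℤ)⟧)
    (hAR : IsARTriangle u v w) (i : ℤ)
    (hui : IrreducibleP (u.f i))
    (hlt : ∀ j : ℤ, j < i → IsSplitEpi (u.f j))
    (hgt : ∀ j : ℤ, i < j → IsSplitMono (u.f j))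
    (hv : Smonic v) :
    ∃ (h1 : ∀ j : ℤ, i < j → IsZero (X.X j)) (h2 : ∀ j : ℤ, j < i → IsZero (Y.X j)),
      Nonempty ((Q Λ).obj Z ≅ (Q Λ).obj (Wcplx u i h1 h2)) := by
  classical
  obtain ⟨hdist, -⟩ := hAR
  set J := Ideal.jacobson (⊥ : Ideal Λᵐᵒᵖ) with hJ
  -- `u ≫ v` is nullhomotopic
  have h0 : (Q Λ).map (u ≫ v) = (Q Λ).map 0 := by
    rw [Functor.map_comp, Functor.map_zero]
    exact Pretriangulated.comp_distTriang_mor_zero₁₂ _ hdist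
  have H := HomotopyCategory.homotopyOfEq _ _ h0
  have hcomm : ∀ j : ℤ, u.f j ≫ v.f j =
      X.d j (j + 1) ≫ H.hom (j + 1) j + H.hom j (j - 1) ≫ Z.d (j - 1) j := by
    intro j
    have hc := H.comm j
    rw [dNext_eq H.hom (show (ComplexShape.up ℤ).Rel j (j + 1) from rfl),
      prevD_eq H.hom (show (ComplexShape.up ℤ).Rel (j - 1) j from by simp)] at hc
    simpa using hc
  have hZd : ∀ a b : ℤ, a + 1 = b →
      LinearMap.range (Z.d a b).hom ≤ J • (⊤ : Submodule Λᵐᵒᵖ (Z.X b)) := by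
    intro a b hab; subst hab; exact hZ.2.2 a
  have hXd : ∀ a b : ℤ, a + 1 = b →
      LinearMap.range (X.d a b).hom ≤ J • (⊤ : Submodule Λᵐᵒᵖ (X.X b)) := by
    intro a b hab; subst hab; exact hX.2.2 a
  -- the components of `u` land in the radical
  have hranu : ∀ j : ℤ, ∀ x : X.X j, u.f j x ∈ J • (⊤ : Submodule Λᵐᵒᵖ (Y.X j)) := by
    intro j x
    have hz : (u.f j ≫ v.f j) x ∈ J • (⊤ : Submodule Λᵐᵒᵖ (Z.X j)) := by
      rw [hcomm j]
      have h1 : (X.d j (j + 1) ≫ H.hom (j + 1) j) x ∈ J • (⊤ : Submodule Λᵐᵒᵖ (Z.X j)) := by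
        have : (X.d j (j + 1) ≫ H.hom (j + 1) j) x = H.hom (j + 1) j (X.d j (j + 1) x) := rfl
        rw [this]
        exact ARShapes.smul_top_map J (H.hom (j + 1) j).hom (hXd j (j + 1) rfl ⟨x, rfl⟩)
      have h2 : (H.hom j (j - 1) ≫ Z.d (j - 1) j) x ∈ J • (⊤ : Submodule Λᵐᵒᵖ (Z.X j)) :=
        hZd (j - 1) j (by omega) ⟨H.hom j (j - 1) x, rfl⟩
      exact Submodule.add_mem _ h1 h2
    haveI := hv j
    have hretr : retraction (v.f j) ((u.f j ≫ v.f j) x) = u.f j x := by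
      have : (u.f j ≫ v.f j) x = v.f j (u.f j x) := rfl
      rw [this]
      change (v.f j ≫ retraction (v.f j)) (u.f j x) = u.f j x
      rw [IsSplitMono.id]; rfl
    rw [← hretr]
    exact ARShapes.smul_top_map J (retraction (v.f j)).hom hz
  -- the two vanishing statements
  have h2 : ∀ j : ℤ, j < i → IsZero (Y.X j) := by
    intro j hj
    haveI := hY.1 j
    haveI := hlt j hj
    haveI : Subsingleton (Y.X j) := by
      apply ARShapes.nakayama (R := Λᵐᵒᵖ)
      intro y _
      have hs : u.f j (section_ (u.f j) y) = y := by
        change (section_ (u.f j) ≫ u.f j) y = y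
        rw [IsSplitEpi.id]; rfl
      rw [← hs]
      exact hranu j _
    exact ModuleCat.isZero_of_subsingleton _
  have h1 : ∀ j : ℤ, i < j → IsZero (X.X j) := by
    intro j hj
    haveI := hX.1 j
    haveI := hgt j hj
    haveI : Subsingleton (X.X j) := by
      apply ARShapes.nakayama (R := Λᵐᵒᵖ)
      intro x _
      have hs : retraction (u.f j) (u.f j x) = x := by
        change (u.f j ≫ retraction (u.f j)) x = x
        rw [IsSplitMono.id]; rfl
      rw [← hs]
      exact ARShapes.smul_top_map J (retraction (u.f j)).hom (hranu j x)
    exact ModuleCat.isZero_of_subsingleton _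
  refine ⟨h1, h2, ⟨?_⟩⟩
  haveI := coneMap_isIso u i h1 h2 (Wsq u i h1 h2)
  have hconedist := HomotopyCategory.mappingCone_triangleh_distinguished u
  exact Triangle.π₃.mapIso
      (Pretriangulated.isoTriangleOfIso₁₂ _ _ hdist hconedist (Iso.refl _) (Iso.refl _) (by
        exact (Category.comp_id ((Q Λ).map u)).trans (Category.id_comp ((Q Λ).map u)).symm))
    ≪≫ ((Q Λ).mapIso (asIso (coneMap u i h1 h2 (Wsq u i h1 h2)))).symm


end ARShapes
end

section
/- Let T be a triangulated category and let X →u Y →v Z →w X[1] be a distinguished triangle in T such that X and Y are indecomposable, u is irreducible, and every endomorphism of Y is either an isomorphism or nilpotent. Then every idempotent endomorphism of Z is 0 or the identity; in particular, the mapping cone Z of u is indecomposable. -/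
/-! Statement 15: Proposition 6 of the paper (the mapping cone of an irreducible
morphism between indecomposable objects is indecomposable). -/

open CategoryTheory CategoryTheory.Limits CategoryTheory.Pretriangulated

namespace ARShapes

/-- A morphism in a category is irreducible if it is neither a split monomorphism nor a
split epimorphism, and in any factorization `f = g ≫ h`, either `g` is a split monomorphism
or `h` is a split epimorphism. -/
def IrreducibleHom {K : Type*} [Category K] {X Y : K} (f : X ⟶ Y) : Prop :=
  ¬ IsSplitMono f ∧ ¬ IsSplitEpi f ∧
    ∀ (Z : K) (g : X ⟶ Z) (h : Z ⟶ Y), f = g ≫ h → IsSplitMono g ∨ IsSplitEpi h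

section AuxGeneral

variable {K : Type*} [Category K]

theorem aux_sm_precomp_iso {A B C' : K} (g : A ⟶ B) [IsIso g] {f : B ⟶ C'}
    (h : IsSplitMono (g ≫ f)) : IsSplitMono f := by
  haveI := h
  refine ⟨⟨⟨retraction (g ≫ f) ≫ g, ?_⟩⟩⟩
  rw [← cancel_epi g]
  simp only [← Category.assoc]
  rw [IsSplitMono.id]
  simp

theorem aux_se_postcomp_iso {A B C' : K} {f : A ⟶ B} (g : B ⟶ C') [IsIso g]
    (h : IsSplitEpi (f ≫ g)) : IsSplitEpi f := by
  haveI := h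
  refine ⟨⟨⟨g ≫ section_ (f ≫ g), ?_⟩⟩⟩
  rw [← cancel_mono g]
  have hid : section_ (f ≫ g) ≫ f ≫ g = 𝟙 C' := by
    simpa [Category.assoc] using IsSplitEpi.id (f ≫ g)
  simp only [Category.assoc]
  rw [hid]
  simp

theorem aux_sm_of_map {L : Type*} [Category L] (F : K ⥤ L) [F.Full] [F.Faithful]
    {A B : K} {f : A ⟶ B} (h : IsSplitMono (F.map f)) : IsSplitMono f := by
  haveI := h
  exact ⟨⟨⟨F.preimage (retraction (F.map f)), F.map_injective (by simp)⟩⟩⟩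

theorem aux_se_of_map {L : Type*} [Category L] (F : K ⥤ L) [F.Full] [F.Faithful]
    {A B : K} {f : A ⟶ B} (h : IsSplitEpi (F.map f)) : IsSplitEpi f := by
  haveI := h
  exact ⟨⟨⟨F.preimage (section_ (F.map f)), F.map_injective (by simp)⟩⟩⟩

theorem aux_se_neg [Preadditive K] {A B : K} {f : A ⟶ B} (h : IsSplitEpi (-f)) :
    IsSplitEpi f := by
  haveI := h
  refine ⟨⟨⟨-section_ (-f), ?_⟩⟩⟩
  have := IsSplitEpi.id (-f)
  rw [Preadditive.comp_neg] at this
  rw [Preadditive.neg_comp]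
  exact this

end AuxGeneral

section Main

variable {T : Type*} [Category T] [Preadditive T] [HasZeroObject T]
    [HasShift T ℤ] [∀ n : ℤ, (shiftFunctor T n).Additive] [Pretriangulated T]

/-- Transport of the factorization property of an irreducible morphism along the shift. -/
theorem aux_shift_factor {X Y : T} {u : X ⟶ Y} (hu : IrreducibleHom u)
    {C : T} (g : X⟦(1:ℤ)⟧ ⟶ C) (h : C ⟶ Y⟦(1:ℤ)⟧)
    (hgh : u⟦(1:ℤ)⟧' = g ≫ h) : IsSplitMono g ∨ IsSplitEpi h := by
  set ι := shiftFunctorCompIsoId T (1:ℤ) (-1:ℤ) (by omega) with hι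
  haveI hIX : IsIso (ι.inv.app X) :=
    ⟨ι.hom.app X, Iso.inv_hom_id_app _ _, Iso.hom_inv_id_app _ _⟩
  haveI hIY : IsIso (ι.hom.app Y) :=
    ⟨ι.inv.app Y, Iso.hom_inv_id_app _ _, Iso.inv_hom_id_app _ _⟩
  have hu2 : u = (ι.inv.app X ≫ g⟦(-1:ℤ)⟧') ≫ (h⟦(-1:ℤ)⟧' ≫ ι.hom.app Y) := by
    have hnat := ι.hom.naturality u
    simp only [Functor.comp_map, Functor.id_map] at hnat
    rw [hgh, Functor.map_comp] at hnat
    calc u = ι.inv.app X ≫ (ι.hom.app X ≫ u) := by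
            rw [← Category.assoc, Iso.inv_hom_id_app, Category.id_comp]
    _ = ι.inv.app X ≫ ((g⟦(-1:ℤ)⟧' ≫ h⟦(-1:ℤ)⟧') ≫ ι.hom.app Y) := by rw [hnat]
    _ = (ι.inv.app X ≫ g⟦(-1:ℤ)⟧') ≫ (h⟦(-1:ℤ)⟧' ≫ ι.hom.app Y) := by
            simp only [Category.assoc]
  rcases hu.2.2 _ (ι.inv.app X ≫ g⟦(-1:ℤ)⟧') (h⟦(-1:ℤ)⟧' ≫ ι.hom.app Y) hu2 with hm | he
  · left
    have h1 : IsSplitMono (g⟦(-1:ℤ)⟧') := aux_sm_precomp_iso (ι.inv.app X) hm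
    exact aux_sm_of_map (shiftFunctor T (-1:ℤ)) h1
  · right
    have h1 : IsSplitEpi (h⟦(-1:ℤ)⟧') := aux_se_postcomp_iso (ι.hom.app Y) he
    exact aux_se_of_map (shiftFunctor T (-1:ℤ)) h1

/-- "Minimality" lemma: an idempotent ε of the cone with `v ≫ ε = 0` vanishes. -/
theorem aux_lemA {X Y Z : T} {u : X ⟶ Y} {v : Y ⟶ Z} {w : Z ⟶ X⟦(1 : ℤ)⟧}
    (hdist : Triangle.mk u v w ∈ distTriang T)
    (hu : IrreducibleHom u)
    (hend : ∀ e : CategoryTheory.End Y, IsIso (e : Y ⟶ Y) ∨ IsNilpotent e)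
    (ε : Z ⟶ Z) (hε : ε ≫ ε = ε) (hvε : v ≫ ε = 0) : ε = 0 := by
  have husplit : ¬ IsSplitEpi u := hu.2.1
  have hτex : ∃ t : X⟦(1:ℤ)⟧ ⟶ Z, ε = w ≫ t := by
    obtain ⟨t, ht⟩ := Triangle.yoneda_exact₂ _ (rot_of_distTriang _ hdist) ε hvε
    exact ⟨t, ht⟩
  obtain ⟨τ, hτ⟩ := hτex
  set ρ : X⟦(1:ℤ)⟧ ⟶ X⟦(1:ℤ)⟧ := τ ≫ w with hρ
  have hT₂ := rot_of_distTriang _ (rot_of_distTriang _ hdist)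
  obtain ⟨c, hc₁, hc₂⟩ := complete_distinguished_triangle_morphism _ _ hT₂ hT₂
      (𝟙 Z - ε) (𝟙 (X⟦(1:ℤ)⟧) - ρ)
      (show w ≫ (𝟙 (X⟦(1:ℤ)⟧) - ρ) = (𝟙 Z - ε) ≫ w by
        rw [Preadditive.comp_sub, Preadditive.sub_comp, Category.comp_id, Category.id_comp,
          hρ, hτ]
        rw [← Category.assoc])
  have hc₁' : (-(u⟦(1:ℤ)⟧')) ≫ c = (𝟙 (X⟦(1:ℤ)⟧) - ρ) ≫ (-(u⟦(1:ℤ)⟧')) := hc₁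
  have hc₂' : (-(v⟦(1:ℤ)⟧')) ≫ (𝟙 Z - ε)⟦(1:ℤ)⟧' = c ≫ (-(v⟦(1:ℤ)⟧')) := hc₂
  have hveq : v ≫ (𝟙 Z - ε) = v := by
    rw [Preadditive.comp_sub, Category.comp_id, hvε, sub_zero]
  have hc₂'' : c ≫ v⟦(1:ℤ)⟧' = v⟦(1:ℤ)⟧' := by
    erw [Preadditive.neg_comp, Preadditive.comp_neg, neg_inj, ← Functor.map_comp, hveq] at hc₂'
    exact hc₂'.symm
  set φ : Y ⟶ Y := (shiftFunctor T (1:ℤ)).preimage c with hφdef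
  have hφ : φ⟦(1:ℤ)⟧' = c := Functor.map_preimage _ _
  have hφv : φ ≫ v = v := by
    apply (shiftFunctor T (1:ℤ)).map_injective
    rw [Functor.map_comp, hφ]
    erw [hc₂'']
  rcases hend φ with hiso | hnil
  · -- φ is iso ⇒ factorization u = x' ≫ (u ≫ inv φ)
    erw [Preadditive.neg_comp, Preadditive.comp_neg, neg_inj] at hc₁'
    -- hc₁' : u⟦1⟧' ≫ c = (𝟙 - ρ) ≫ u⟦1⟧'
    set x' : X ⟶ X := (shiftFunctor T (1:ℤ)).preimage (𝟙 (X⟦(1:ℤ)⟧) - ρ) with hx'def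
    have hx : x'⟦(1:ℤ)⟧' = 𝟙 (X⟦(1:ℤ)⟧) - ρ := Functor.map_preimage _ _
    have hxu : x' ≫ u = u ≫ φ := by
      apply (shiftFunctor T (1:ℤ)).map_injective
      rw [Functor.map_comp, Functor.map_comp, hx, hφ]
      erw [hc₁']
    have hfact : u = x' ≫ (u ≫ inv φ) := by
      rw [← Category.assoc, hxu, Category.assoc, IsIso.hom_inv_id, Category.comp_id]
    rcases hu.2.2 _ x' (u ≫ inv φ) hfact with hm | he
    · -- x' split mono
      haveI := hm
      have hr : (𝟙 (X⟦(1:ℤ)⟧) - ρ) ≫ (retraction x')⟦(1:ℤ)⟧' = 𝟙 (X⟦(1:ℤ)⟧) := by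
        rw [← hx, ← Functor.map_comp, IsSplitMono.id, CategoryTheory.Functor.map_id]
      have hε' : (w ≫ τ) ≫ (w ≫ τ) = w ≫ τ := by rw [← hτ]; exact hε
      have hC : (ρ ≫ ρ) ≫ ρ = ρ ≫ ρ := by
        rw [hρ]
        simp only [← Category.assoc]
        rw [Category.assoc τ w τ, ← hτ, Category.assoc (τ ≫ ε) w τ, ← hτ,
          Category.assoc τ ε ε, hε]
      have hρ20 : ρ ≫ ρ = 0 := by
        have hz : (ρ ≫ ρ) ≫ (𝟙 (X⟦(1:ℤ)⟧) - ρ) = 0 := by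
          rw [Preadditive.comp_sub, Category.comp_id, hC, sub_self]
        have hstep : ((ρ ≫ ρ) ≫ (𝟙 (X⟦(1:ℤ)⟧) - ρ)) ≫ (retraction x')⟦(1:ℤ)⟧' = ρ ≫ ρ := by
          rw [Category.assoc (ρ ≫ ρ) (𝟙 (X⟦(1:ℤ)⟧) - ρ) ((retraction x')⟦(1:ℤ)⟧'), hr,
            Category.comp_id]
        rw [← hstep, hz, zero_comp]
      have hε3 : ε = (ε ≫ ε) ≫ ε := by rw [hε, hε]
      calc ε = (ε ≫ ε) ≫ ε := hε3
      _ = w ≫ ((τ ≫ w) ≫ (τ ≫ w)) ≫ τ := by rw [hτ]; simp only [Category.assoc]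
      _ = w ≫ (ρ ≫ ρ) ≫ τ := by rw [hρ]
      _ = 0 := by rw [hρ20, zero_comp, comp_zero]
    · -- u ≫ inv φ split epi ⇒ u split epi, contradiction
      exact absurd (aux_se_postcomp_iso (inv φ) he) husplit
  · -- φ nilpotent ⇒ v = 0 ⇒ u split epi, contradiction
    exfalso
    obtain ⟨n, hn⟩ := hnil
    let φE : CategoryTheory.End Y := φ
    have hφvE : φE ≫ v = v := hφv
    have hnE : φE ^ n = 0 := hn
    have hpow : ∀ k : ℕ, (φE ^ k) ≫ v = v := by
      intro k; induction k with
      | zero => rw [pow_zero]; exact Category.id_comp v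
      | succ k ih => rw [pow_succ, End.mul_def, Category.assoc, ih]; exact hφvE
    have hv0 : v = 0 := by
      have h := hpow n
      rw [hnE] at h
      rw [← h]
      exact zero_comp
    obtain ⟨s₀, hs₀⟩ := Triangle.coyoneda_exact₂ _ hdist (𝟙 Y)
      (show 𝟙 Y ≫ v = 0 by rw [hv0, comp_zero])
    exact husplit ⟨⟨⟨s₀, hs₀.symm⟩⟩⟩

/-- Main lemma for the lifted case: if an idempotent of the cone lifts to an isomorphism
of `Y`, it equals the identity. -/
theorem aux_lemB {X Y Z : T} {u : X ⟶ Y} {v : Y ⟶ Z} {w : Z ⟶ X⟦(1 : ℤ)⟧}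
    (hdist : Triangle.mk u v w ∈ distTriang T)
    (hu : IrreducibleHom u)
    (hend : ∀ e : CategoryTheory.End Y, IsIso (e : Y ⟶ Y) ∨ IsNilpotent e)
    (e : Z ⟶ Z) (he : e ≫ e = e) (φ : Y ⟶ Y) (hφ : φ ≫ v = v ≫ e)
    (hiso : IsIso φ) : e = 𝟙 Z := by
  have h2 : (φ ≫ φ) ≫ v = v ≫ e := by
    rw [Category.assoc, hφ, ← Category.assoc, hφ, Category.assoc, he]
  have h1 : (φ - φ ≫ φ) ≫ v = 0 := by
    rw [Preadditive.sub_comp, hφ, h2, sub_self]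
  obtain ⟨s, hs⟩ := Triangle.coyoneda_exact₂ _ hdist (φ - φ ≫ φ) h1
  have hs' : φ - φ ≫ φ = s ≫ u := hs
  rcases hend (𝟙 Y - φ) with hiso2 | hnil2
  · exfalso
    have h3 : φ ≫ (𝟙 Y - φ) = s ≫ u := by
      rw [Preadditive.comp_sub, Category.comp_id]; exact hs'
    have h4 : 𝟙 Y - φ = (inv φ ≫ s) ≫ u := by
      calc 𝟙 Y - φ = inv φ ≫ (φ ≫ (𝟙 Y - φ)) := by
            rw [← Category.assoc, IsIso.inv_hom_id, Category.id_comp]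
      _ = inv φ ≫ (s ≫ u) := by rw [h3]
      _ = (inv φ ≫ s) ≫ u := (Category.assoc _ _ _).symm
    have : IsSplitEpi u := ⟨⟨⟨inv (𝟙 Y - φ) ≫ (inv φ ≫ s), by
      erw [Category.assoc, ← h4, IsIso.inv_hom_id]⟩⟩⟩
    exact hu.2.1 this
  · obtain ⟨n, hn⟩ := hnil2
    have hlift : (𝟙 Y - φ) ≫ v = v ≫ (𝟙 Z - e) := by
      rw [Preadditive.sub_comp, Preadditive.comp_sub, hφ, Category.id_comp, Category.comp_id]
    have hidem : (𝟙 Z - e) ≫ (𝟙 Z - e) = 𝟙 Z - e := by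
      simp only [Preadditive.sub_comp, Preadditive.comp_sub, Category.id_comp,
        Category.comp_id, he]
      abel
    let αE : CategoryTheory.End Y := 𝟙 Y - φ
    have hnE : αE ^ n = 0 := hn
    have hliftE : αE ≫ v = v ≫ (𝟙 Z - e) := hlift
    have hpow : ∀ k : ℕ, (αE ^ (k+1)) ≫ v = v ≫ (𝟙 Z - e) := by
      intro k; induction k with
      | zero => rw [pow_one]; exact hliftE
      | succ k ih =>
          rw [pow_succ, End.mul_def, Category.assoc, ih, ← Category.assoc, hliftE,
            Category.assoc, hidem]
    have hv : v ≫ (𝟙 Z - e) = 0 := by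
      have h := hpow n
      rw [pow_succ, hnE, zero_mul] at h
      rw [← h]
      exact zero_comp
    have h5 := aux_lemA hdist hu hend (𝟙 Z - e) hidem hv
    rw [sub_eq_zero] at h5
    exact h5.symm

end Main

/-- Let `X →u Y →v Z →w X[1]` be a distinguished triangle in a
triangulated category `T` with `X` and `Y` indecomposable, `u` irreducible, and every
endomorphism of `Y` an isomorphism or nilpotent.  Then every idempotent endomorphism of the
mapping cone `Z` is `0` or the identity; in particular `Z` is indecomposable. -/
theorem cone_of_irreducible_indecomposable
    {T : Type*} [Category T] [Preadditive T] [HasZeroObject T]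
    [HasShift T ℤ] [∀ n : ℤ, (shiftFunctor T n).Additive] [Pretriangulated T]
    [IsTriangulated T]
    {X Y Z : T} (u : X ⟶ Y) (v : Y ⟶ Z) (w : Z ⟶ X⟦(1 : ℤ)⟧)
    (hdist : Triangle.mk u v w ∈ distTriang T)
    (hX : Indecomposable X) (hY : Indecomposable Y)
    (hu : IrreducibleHom u)
    (hend : ∀ e : CategoryTheory.End Y, IsIso (e : Y ⟶ Y) ∨ IsNilpotent e) :
    (∀ e : Z ⟶ Z, e ≫ e = e → e = 0 ∨ e = 𝟙 Z) ∧ Indecomposable Z := by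
  have husplit : ¬ IsSplitEpi u := hu.2.1
  have hvw : v ≫ w = 0 := comp_distTriang_mor_zero₂₃ _ hdist
  have key : ∀ e : Z ⟶ Z, e ≫ e = e → e = 0 ∨ e = 𝟙 Z := by
    intro e he
    by_cases hγ : (v ≫ e) ≫ w = 0
    · -- Case I : the idempotent lifts along v
      have hliftex : ∃ g : Y ⟶ Y, v ≫ e = g ≫ v := by
        obtain ⟨g, hg⟩ := Triangle.coyoneda_exact₂ _ (rot_of_distTriang _ hdist) (v ≫ e) hγ
        exact ⟨g, hg⟩
      obtain ⟨φ₀, hφ₀⟩ := hliftex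
      rcases hend φ₀ with hiso | hnil
      · right
        exact aux_lemB hdist hu hend e he φ₀ hφ₀.symm hiso
      · left
        have hiso2 : IsIso (𝟙 Y - φ₀) := by
          let φE : CategoryTheory.End Y := φ₀
          have hnilE : IsNilpotent φE := hnil
          have h1 : IsUnit (1 - φE) := IsNilpotent.isUnit_one_sub hnilE
          have h2 : IsIso ((1 - φE : CategoryTheory.End Y) : Y ⟶ Y) :=
            (isUnit_iff_isIso _).mp h1
          exact h2
        have h2 : (𝟙 Y - φ₀) ≫ v = v ≫ (𝟙 Z - e) := by
          rw [Preadditive.sub_comp, Preadditive.comp_sub, ← hφ₀, Category.id_comp,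
            Category.comp_id]
        have hidem : (𝟙 Z - e) ≫ (𝟙 Z - e) = 𝟙 Z - e := by
          simp only [Preadditive.sub_comp, Preadditive.comp_sub, Category.id_comp,
            Category.comp_id, he]
          abel
        have h3 := aux_lemB hdist hu hend (𝟙 Z - e) hidem (𝟙 Y - φ₀) h2 hiso2
        rwa [sub_eq_self] at h3
    · -- Case II : v ≫ e ≫ w ≠ 0 leads to a contradiction
      exfalso
      obtain ⟨Cf, c, d, hCf⟩ := Pretriangulated.distinguished_cocone_triangle (v ≫ e)
      obtain ⟨CC, a, b, hCC⟩ := Pretriangulated.distinguished_cocone_triangle ((v ≫ e) ≫ w)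
      have hT₂ : Triangle.mk w (-(u⟦(1:ℤ)⟧')) (-(v⟦(1:ℤ)⟧')) ∈ distTriang T :=
        rot_of_distTriang _ (rot_of_distTriang _ hdist)
      have O := Triangulated.someOctahedron (rfl : (v ≫ e) ≫ w = (v ≫ e) ≫ w) hCf hT₂ hCC
      have hcomm₃ : a ≫ O.m₃ = -(u⟦(1:ℤ)⟧') := O.comm₃
      have hfact : u⟦(1:ℤ)⟧' = a ≫ (-O.m₃) := by
        rw [Preadditive.comp_neg, hcomm₃, neg_neg]
      rcases aux_shift_factor hu a (-O.m₃) hfact with hm | he2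
      · -- a split mono ⇒ (v ≫ e) ≫ w = 0, contradiction
        haveI := hm
        have h0 : ((v ≫ e) ≫ w) ≫ a = 0 := comp_distTriang_mor_zero₁₂ _ hCC
        apply hγ
        calc (v ≫ e) ≫ w = (((v ≫ e) ≫ w) ≫ a) ≫ retraction a := by
              rw [Category.assoc ((v ≫ e) ≫ w) a (retraction a), IsSplitMono.id,
                Category.comp_id]
        _ = 0 := by rw [h0, zero_comp]
      · -- -O.m₃ split epi
        have hm₃ : IsSplitEpi O.m₃ := aux_se_neg he2
        haveI := hm₃
        have hstar : O.m₃ ≫ ((-(v⟦(1:ℤ)⟧')) ≫ c⟦(1:ℤ)⟧') = 0 :=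
          comp_distTriang_mor_zero₂₃ _ O.mem
        have hvc1 : (-(v⟦(1:ℤ)⟧')) ≫ c⟦(1:ℤ)⟧' = 0 := by
          calc (-(v⟦(1:ℤ)⟧')) ≫ c⟦(1:ℤ)⟧'
              = (section_ O.m₃ ≫ O.m₃) ≫ ((-(v⟦(1:ℤ)⟧')) ≫ c⟦(1:ℤ)⟧') := by
                rw [IsSplitEpi.id, Category.id_comp]
          _ = 0 := by rw [Category.assoc, hstar, comp_zero]
        have hvc : v ≫ c = 0 := by
          apply (shiftFunctor T (1:ℤ)).map_injective
          rw [Functor.map_comp, Functor.map_zero]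
          rw [Preadditive.neg_comp, neg_eq_zero] at hvc1
          exact hvc1
        have hηex : ∃ g : Y ⟶ Y, v = g ≫ (v ≫ e) := by
          obtain ⟨g, hg⟩ := Triangle.coyoneda_exact₂ _ hCf v hvc
          exact ⟨g, hg⟩
        obtain ⟨η, hη⟩ := hηex
        rcases hend η with hiso | hnil
        · -- η iso ⇒ (v ≫ e) ≫ w = 0, contradiction
          have hinv : inv η ≫ v = v ≫ e := by
            conv_lhs => rw [hη]
            rw [← Category.assoc, IsIso.inv_hom_id, Category.id_comp]
          apply hγ
          calc (v ≫ e) ≫ w = (inv η ≫ v) ≫ w := by rw [hinv]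
          _ = inv η ≫ (v ≫ w) := Category.assoc _ _ _
          _ = 0 := by rw [hvw, comp_zero]
        · -- η nilpotent ⇒ v = 0 ⇒ u split epi, contradiction
          obtain ⟨n, hn⟩ := hnil
          have hve : v ≫ e = η ≫ (v ≫ e) := by
            conv_lhs => rw [hη]
            simp only [Category.assoc]
            rw [he]
          let ηE : CategoryTheory.End Y := η
          have hnE : ηE ^ n = 0 := hn
          have hηE : v = ηE ≫ (v ≫ e) := hη
          have hveE : v ≫ e = ηE ≫ (v ≫ e) := hve
          have hpow : ∀ k : ℕ, v = (ηE ^ (k+1)) ≫ (v ≫ e) := by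
            intro k; induction k with
            | zero => rw [pow_one]; exact hηE
            | succ k ih =>
                calc v = (ηE ^ (k+1)) ≫ (v ≫ e) := ih
                _ = (ηE ^ (k+1)) ≫ (ηE ≫ (v ≫ e)) := by
                      conv_lhs => rw [hveE]
                _ = (ηE ^ (k+1+1)) ≫ (v ≫ e) := by
                      rw [pow_succ' ηE (k+1), End.mul_def, Category.assoc]
          have hv0 : v = 0 := by
            have h := hpow n
            rw [pow_succ, hnE, zero_mul] at h
            rw [h]
            exact zero_comp
          obtain ⟨s₀, hs₀⟩ := Triangle.coyoneda_exact₂ _ hdist (𝟙 Y)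
            (show 𝟙 Y ≫ v = 0 by rw [hv0, comp_zero])
          exact husplit ⟨⟨⟨s₀, hs₀.symm⟩⟩⟩
  refine ⟨key, ?_, ?_⟩
  · -- Z is not zero
    intro hZ
    have hv0 : v = 0 := hZ.eq_zero_of_tgt v
    obtain ⟨s₀, hs₀⟩ := Triangle.coyoneda_exact₂ _ hdist (𝟙 Y)
      (show 𝟙 Y ≫ v = 0 by rw [hv0, comp_zero])
    exact husplit ⟨⟨⟨s₀, hs₀.symm⟩⟩⟩
  · -- any biproduct decomposition is trivial
    intro A B i j p q hip hjq hiq hjp hsum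
    have he : (p ≫ i) ≫ (p ≫ i) = p ≫ i := by
      rw [Category.assoc, ← Category.assoc i p i, hip, Category.id_comp]
    rcases key (p ≫ i) he with h0 | h1
    · left
      rw [IsZero.iff_id_eq_zero]
      calc 𝟙 A = (i ≫ p) ≫ (i ≫ p) := by rw [hip, Category.id_comp]
      _ = i ≫ (p ≫ i) ≫ p := by simp only [Category.assoc]
      _ = 0 := by rw [h0, zero_comp, comp_zero]
    · right
      have hqj : q ≫ j = 0 := by
        have h := hsum
        rw [h1] at h
        rwa [add_eq_left] at h
      rw [IsZero.iff_id_eq_zero]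
      calc 𝟙 B = (j ≫ q) ≫ (j ≫ q) := by rw [hjq, Category.id_comp]
      _ = j ≫ (q ≫ j) ≫ q := by simp only [Category.assoc]
      _ = 0 := by rw [hqj, zero_comp, comp_zero]

end ARShapes
end

section
/- Let X and Y be minimal projective complexes such that X^i = Y^i = 0 for all i > 0 and there exists t > 0 with X^{-i} = 0 for all i > t and X^{-t} ≠ 0. If f : X → Y is an irreducible morphism in C_I(P), then Y^{-k} = 0 for all k ≥ t + 2. -/
/-! Statement 18: Proposition 8 of the paper. -/

open CategoryTheory CategoryTheory.Limits

namespace ARShapes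

variable {Λ : Type} [Ring Λ]

/-- Irreducibility of a chain map in the category `C_I(P)` of minimal projective
complexes (a full subcategory of all complexes). -/
def IrreducibleC {X Y : Cplx Λ} (f : X ⟶ Y) : Prop :=
  ¬ IsSplitMono f ∧ ¬ IsSplitEpi f ∧
    ∀ (Z : Cplx Λ), IsMinimalProjective Z →
      ∀ (g : X ⟶ Z) (h : Z ⟶ Y), f = g ≫ h → IsSplitMono g ∨ IsSplitEpi h


/-- The complex obtained from `Y` by keeping all modules but zeroing out all
differentials starting in degrees `< n`. -/
@[reducible] def zeroBelow (Y : Cplx Λ) (n : ℤ) : Cplx Λ where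
  X := Y.X
  d i j := if n ≤ i then Y.d i j else 0
  shape i j h := by
    by_cases hi : n ≤ i <;> simp [hi, Y.shape i j h]
  d_comp_d' i j k hij hjk := by
    simp only [ComplexShape.up_Rel] at hij hjk
    by_cases hi : n ≤ i
    · have hj : n ≤ j := by omega
      simp [if_pos hi, if_pos hj]
    · simp [if_neg hi]

@[simp] lemma zeroBelow_X (Y : Cplx Λ) (n i : ℤ) : (zeroBelow Y n).X i = Y.X i := rfl

@[simp] lemma zeroBelow_d (Y : Cplx Λ) (n i j : ℤ) :
    (zeroBelow Y n).d i j = if n ≤ i then Y.d i j else 0 := rfl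

lemma isMinimalProjective_zeroBelow (Y : Cplx Λ) (n : ℤ) (hY : IsMinimalProjective Y) :
    IsMinimalProjective (zeroBelow Y n) := by
  refine ⟨hY.1, hY.2.1, fun i => ?_⟩
  by_cases hi : n ≤ i
  · simpa [if_pos hi] using hY.2.2 i
  · simp only [zeroBelow_d, if_neg hi]
    rw [show ((0 : (zeroBelow Y n).X i ⟶ (zeroBelow Y n).X (i+1)).hom :
        (zeroBelow Y n).X i →ₗ[Λᵐᵒᵖ] (zeroBelow Y n).X (i+1)) = 0 from rfl]
    rw [LinearMap.range_zero]
    exact bot_le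

/-- Let `X`, `Y` be minimal projective complexes vanishing in positive
degrees, and suppose there is `t > 0` with `X^{-i} = 0` for all `i > t` and `X^{-t} ≠ 0`.
If `f : X ⟶ Y` is irreducible in `C_I(P)`, then `Y^{-k} = 0` for all `k ≥ t + 2`. -/
theorem isZero_of_irreducible
    {k Λ : Type} [Field k] [Ring Λ] [Algebra k Λ] [FiniteDimensional k Λ]
    (X Y : Cplx Λ) (hX : IsMinimalProjective X) (hY : IsMinimalProjective Y)
    (h₀X : ∀ i : ℤ, 0 < i → IsZero (X.X i)) (h₀Y : ∀ i : ℤ, 0 < i → IsZero (Y.X i))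
    (t : ℤ) (ht : 0 < t)
    (h₁ : ∀ i : ℤ, t < i → IsZero (X.X (-i)))
    (h₂ : ¬ IsZero (X.X (-t)))
    (f : X ⟶ Y) (hf : IrreducibleC f) :
    ∀ k' : ℤ, t + 2 ≤ k' → IsZero (Y.X (-k')) := by
  intro k' hk'
  set n : ℤ := -(t+1) with hn
  have hXz : ∀ i : ℤ, i < n → IsZero (X.X i) := by
    intro i hi
    have := h₁ (-i) (by omega)
    simpa using this
  have hXn : IsZero (X.X n) := by
    simpa [hn] using h₁ (t+1) (by omega)
  have hZmin : IsMinimalProjective (zeroBelow Y n) := isMinimalProjective_zeroBelow Y n hY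
  let g : X ⟶ zeroBelow Y n :=
    { f := fun i => if hi : n ≤ i then f.f i else 0
      comm' := by
        intro i j hij
        simp only [ComplexShape.up_Rel] at hij
        by_cases hi : n ≤ i
        · have hj : n ≤ j := by omega
          simp only [dif_pos hi, dif_pos hj, zeroBelow_d, if_pos hi]
          exact f.comm' i j (by simpa using hij)
        · by_cases hj : n ≤ j
          · have hzi : IsZero (X.X i) := hXz i (by omega)
            exact hzi.eq_of_src _ _
          · simp [dif_neg hi, dif_neg hj] }
  let h : zeroBelow Y n ⟶ Y :=
    { f := fun i => if hi : n ≤ i then 𝟙 (Y.X i) else 0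
      comm' := by
        intro i j hij
        simp only [ComplexShape.up_Rel] at hij
        by_cases hi : n ≤ i
        · have hj : n ≤ j := by omega
          simp [dif_pos hi, dif_pos hj, if_pos hi]
        · simp [dif_neg hi, if_neg hi] }
  have hfgh : f = g ≫ h := by
    ext i : 1
    by_cases hi : n ≤ i
    · simp [g, h, hi]
    · have hzi : IsZero (X.X i) := hXz i (by omega)
      exact hzi.eq_of_src _ _
  rcases hf.2.2 (zeroBelow Y n) hZmin g h hfgh with hg | hh
  · exfalso
    obtain ⟨⟨r, hr⟩⟩ := hg.exists_splitMono
    let s : Y ⟶ X :=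
      { f := fun i => if hi : n ≤ i then r.f i else 0
        comm' := by
          intro i j hij
          simp only [ComplexShape.up_Rel] at hij
          by_cases hi : n ≤ i
          · have hj : n ≤ j := by omega
            have := r.comm' i j (by simpa using hij)
            simp only [zeroBelow_d, if_pos hi] at this
            simp only [dif_pos hi, dif_pos hj]
            exact this
          · by_cases hj : n ≤ j
            · have hzj : IsZero (X.X j) := by
                have : j = n := by omega
                rw [this]; exact hXn
              exact hzj.eq_of_tgt _ _
            · have hzj : IsZero (X.X j) := hXz j (by omega)
              exact hzj.eq_of_tgt _ _ }
    have : IsSplitMono f := by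
      refine ⟨⟨⟨s, ?_⟩⟩⟩
      ext i : 1
      by_cases hi : n ≤ i
      · have h1 := HomologicalComplex.congr_hom hr i
        simp only [HomologicalComplex.comp_f, HomologicalComplex.id_f] at h1
        simp only [g, dif_pos hi] at h1
        simp only [HomologicalComplex.comp_f, HomologicalComplex.id_f, s, dif_pos hi]
        exact h1
      · exact (hXz i (by omega)).eq_of_src _ _
    exact hf.1 this
  · obtain ⟨⟨s, hs⟩⟩ := hh.exists_splitEpi
    have h1 := HomologicalComplex.congr_hom hs (-k')
    simp only [HomologicalComplex.comp_f, HomologicalComplex.id_f] at h1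
    have hk : ¬ (n ≤ -k') := by omega
    simp only [h, dif_neg hk, Limits.comp_zero] at h1
    rw [IsZero.iff_id_eq_zero]
    exact h1.symm


end ARShapes
end
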